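/- Let n be a positive integer, let b : ℤ/2nℤ → ℤ be (the first row of) a circulant weighing matrix CW(2n,k), and let c : ℤ/nℤ → ℤ be (the first row of) a circulant weighing matrix CW(n,k). Let e : ℤ/2nℤ → ℤ be the spread of c, i.e. e(2i) = c(i mod n) for i = 0,…,n-1 and e(x) = 0 for odd x (this is well defined). Suppose the supports of the four functions x ↦ b(x), x ↦ b(x-n), x ↦ e(x), x ↦ e(x-n) are pairwise disjoint. Then the function a : ℤ/2nℤ → ℤ given by a(x) = b(x) - b(x-n) + e(x) + e(x-n) takes values in {-1,0,1} and is (the first row of) a circulant weighing matrix CW(2n,4k). -/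

import Mathlib

private lemma cw_sum_shift {m : ℕ} [NeZero m] (f g : ZMod m → ℤ) (s u : ZMod m) :
    (∑ x : ZMod m, f (x - s) * g (x + u)) = ∑ x : ZMod m, f x * g (x + (u + s)) := by
  rw [← Equiv.sum_comp (Equiv.subRight s) (fun y => f y * g (y + (u + s)))]
  refine Finset.sum_congr rfl fun x _ => ?_
  simp only [Equiv.subRight_apply]
  congr 2
  ring

private lemma cw_spread_auto (n : ℕ) [NeZero n] (k : ℤ) (c : ZMod n → ℤ)
    (hcauto : ∀ t : ZMod n,
      (∑ x : ZMod n, c x * c (x + t)) = if t = 0 then k else 0)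
    (e : ZMod (2 * n) → ℤ)
    (he : ∀ x : ZMod (2 * n),
      e x = if x.val % 2 = 0 then c ((x.val / 2 : ℕ) : ZMod n) else 0)
    (u : ZMod (2 * n)) :
    (∑ x : ZMod (2 * n), e x * e (x + u)) = if u = 0 then k else 0 := by
  haveI : NeZero (2 * n) := ⟨by have := NeZero.ne n; omega⟩
  have hn : 0 < n := Nat.pos_of_ne_zero (NeZero.ne n)
  -- the embedding of ZMod n × Fin 2 into ZMod (2n)
  set φ : ZMod n × Fin 2 → ZMod (2 * n) :=
    fun p => ((2 * p.1.val + p.2.val : ℕ) : ZMod (2 * n)) with hφ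
  have hval : ∀ p : ZMod n × Fin 2, (φ p).val = 2 * p.1.val + p.2.val := by
    intro p
    rw [hφ, ZMod.val_natCast, Nat.mod_eq_of_lt]
    have h1 := ZMod.val_lt p.1
    have h2 := p.2.isLt
    omega
  have hbij : Function.Bijective φ := by
    rw [Fintype.bijective_iff_injective_and_card]
    constructor
    · intro p q hpq
      have : (φ p).val = (φ q).val := by rw [hpq]
      rw [hval, hval] at this
      have h2 := p.2.isLt; have h2' := q.2.isLt
      have hv : p.1.val = q.1.val ∧ p.2.val = q.2.val := by omega
      exact Prod.ext (ZMod.val_injective _ hv.1) (Fin.val_injective hv.2)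
    · simp [ZMod.card, Nat.mul_comm]
  -- sum over ZMod 2n = sum over pairs
  have hsum : ∀ F : ZMod (2 * n) → ℤ,
      (∑ x : ZMod (2 * n), F x) = ∑ i : ZMod n, (F (φ (i, 0)) + F (φ (i, 1))) := by
    intro F
    rw [← Fintype.sum_bijective φ hbij _ F (fun _ => rfl), Fintype.sum_prod_type]
    exact Finset.sum_congr rfl fun i _ => by rw [Fin.sum_univ_two]
  have hodd : ∀ i : ZMod n, e (φ (i, 1)) = 0 := by
    intro i
    rw [he, if_neg]
    rw [hval]
    have h1 : (((i, (1 : Fin 2)).2 : Fin 2) : ℕ) = 1 := rfl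
    omega
  have heven : ∀ i : ZMod n, e (φ (i, 0)) = c i := by
    intro i
    rw [he, hval]
    have h0 : (((i, (0 : Fin 2)).2 : Fin 2) : ℕ) = 0 := rfl
    rw [h0, Nat.add_zero, if_pos (Nat.mul_mod_right 2 _),
      Nat.mul_div_cancel_left _ (by norm_num : 0 < 2), ZMod.natCast_zmod_val]
  rw [hsum]
  simp only [hodd, heven, zero_mul, add_zero]
  -- now split on parity of u
  rcases Nat.even_or_odd u.val with hu | hu
  · -- u even
    set s : ZMod n := ((u.val / 2 : ℕ) : ZMod n) with hs
    have key : ∀ i : ZMod n, e (φ (i, 0) + u) = c (i + s) := by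
      intro i
      have hv : (φ (i, 0) + u).val = (2 * i.val + u.val) % (2 * n) := by
        rw [ZMod.val_add, hval]; simp
      have hb1 := ZMod.val_lt i
      have hb2 := ZMod.val_lt u
      obtain ⟨m, hm⟩ := hu
      rw [he, hv]
      by_cases hlt : 2 * i.val + u.val < 2 * n
      · rw [Nat.mod_eq_of_lt hlt, if_pos (by omega)]
        have : (2 * i.val + u.val) / 2 = i.val + u.val / 2 := by omega
        rw [this]
        push_cast
        rw [ZMod.natCast_zmod_val]
      · have hmod : (2 * i.val + u.val) % (2 * n) = 2 * i.val + u.val - 2 * n := by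
          rw [Nat.mod_eq_sub_mod (by omega), Nat.mod_eq_of_lt (by omega)]
        rw [hmod, if_pos (by omega)]
        have h2 : (2 * i.val + u.val - 2 * n) / 2 = i.val + u.val / 2 - n := by omega
        rw [h2]
        have h3 : n ≤ i.val + u.val / 2 := by omega
        rw [Nat.cast_sub h3]
        push_cast
        rw [ZMod.natCast_zmod_val, ZMod.natCast_self]
        ring_nf
        rfl
    simp only [key]
    rw [hcauto s]
    have hiff : u = 0 ↔ s = 0 := by
      constructor
      · intro h; rw [hs, h]; simp [ZMod.val_zero]
      · intro h
        rw [hs] at h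
        rw [ZMod.natCast_eq_zero_iff] at h
        have hb2 := ZMod.val_lt u
        have : u.val / 2 < n := by omega
        have : u.val / 2 = 0 := by
          rcases h with ⟨q, hq⟩
          rcases q with _ | q
          · omega
          · nlinarith
        obtain ⟨m, hm⟩ := hu
        have : u.val = 0 := by omega
        exact (ZMod.val_eq_zero u).mp this
    by_cases h : u = 0
    · rw [if_pos h, if_pos (hiff.mp h)]
    · rw [if_neg h, if_neg (fun hs0 => h (hiff.mpr hs0))]
  · -- u odd : all terms vanish
    have key : ∀ i : ZMod n, e (φ (i, 0) + u) = 0 := by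
      intro i
      have hv : (φ (i, 0) + u).val = (2 * i.val + u.val) % (2 * n) := by
        rw [ZMod.val_add, hval]; simp
      rw [he, if_neg]
      rw [hv]
      obtain ⟨m, hm⟩ := hu
      have : (2 * i.val + u.val) % (2 * n) % 2 = (2 * i.val + u.val) % 2 :=
        Nat.mod_mod_of_dvd _ ⟨n, rfl⟩
      omega
    simp only [key, mul_zero, Finset.sum_const_zero]
    rw [if_neg]
    intro h
    rw [h, ZMod.val_zero] at hu
    exact (Nat.not_odd_iff_even.mpr Even.zero) hu

theorem cw_doubling (n : ℕ) [NeZero n] (k : ℤ)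
    (b : ZMod (2 * n) → ℤ) (c : ZMod n → ℤ)
    (hbvals : ∀ x : ZMod (2 * n), b x = -1 ∨ b x = 0 ∨ b x = 1)
    (hbauto : ∀ t : ZMod (2 * n),
      (∑ x : ZMod (2 * n), b x * b (x + t)) = if t = 0 then k else 0)
    (hcvals : ∀ x : ZMod n, c x = -1 ∨ c x = 0 ∨ c x = 1)
    (hcauto : ∀ t : ZMod n,
      (∑ x : ZMod n, c x * c (x + t)) = if t = 0 then k else 0)
    (e : ZMod (2 * n) → ℤ)
    (he : ∀ x : ZMod (2 * n),
      e x = if x.val % 2 = 0 then c ((x.val / 2 : ℕ) : ZMod n) else 0)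
    (hdisj : ∀ x : ZMod (2 * n),
      (b x = 0 ∨ b (x - (n : ZMod (2 * n))) = 0) ∧
      (b x = 0 ∨ e x = 0) ∧
      (b x = 0 ∨ e (x - (n : ZMod (2 * n))) = 0) ∧
      (b (x - (n : ZMod (2 * n))) = 0 ∨ e x = 0) ∧
      (b (x - (n : ZMod (2 * n))) = 0 ∨ e (x - (n : ZMod (2 * n))) = 0) ∧
      (e x = 0 ∨ e (x - (n : ZMod (2 * n))) = 0)) :
    (∀ x : ZMod (2 * n),
      b x - b (x - (n : ZMod (2 * n))) + e x + e (x - (n : ZMod (2 * n))) = -1 ∨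
      b x - b (x - (n : ZMod (2 * n))) + e x + e (x - (n : ZMod (2 * n))) = 0 ∨
      b x - b (x - (n : ZMod (2 * n))) + e x + e (x - (n : ZMod (2 * n))) = 1) ∧
    (∀ t : ZMod (2 * n),
      (∑ x : ZMod (2 * n),
        (b x - b (x - (n : ZMod (2 * n))) + e x + e (x - (n : ZMod (2 * n)))) *
        (b (x + t) - b (x + t - (n : ZMod (2 * n))) + e (x + t) +
          e (x + t - (n : ZMod (2 * n))))) = if t = 0 then 4 * k else 0) := by
  haveI : NeZero (2 * n) := ⟨by have := NeZero.ne n; omega⟩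
  set N : ZMod (2 * n) := (n : ZMod (2 * n)) with hNdef
  have hnn : N + N = 0 := by
    have h0 : ((2 * n : ℕ) : ZMod (2 * n)) = 0 := ZMod.natCast_self _
    push_cast at h0
    linear_combination h0
  have hevals : ∀ x : ZMod (2 * n), e x = -1 ∨ e x = 0 ∨ e x = 1 := by
    intro x
    rw [he]
    split
    · exact hcvals _
    · right; left; rfl
  constructor
  · -- values
    intro x
    obtain ⟨d1, d2, d3, d4, d5, d6⟩ := hdisj x
    by_cases h1 : b x = 0
    · by_cases h2 : b (x - N) = 0
      · by_cases h3 : e x = 0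
        · rcases hevals (x - N) with h | h | h <;> rw [h1, h2, h3, h] <;> norm_num
        · have h4 : e (x - N) = 0 := d6.resolve_left h3
          rcases hevals x with h | h | h <;> rw [h1, h2, h4, h] <;> norm_num
      · have h3 : e x = 0 := d4.resolve_left h2
        have h4 : e (x - N) = 0 := d5.resolve_left h2
        rcases hbvals (x - N) with h | h | h <;> rw [h1, h3, h4, h] <;> norm_num
    · have h2 : b (x - N) = 0 := d1.resolve_left h1
      have h3 : e x = 0 := d2.resolve_left h1
      have h4 : e (x - N) = 0 := d3.resolve_left h1
      rcases hbvals x with h | h | h <;> rw [h2, h3, h4, h] <;> norm_num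
  · -- autocorrelation
    intro t
    have hsub : ∀ s : ZMod (2 * n), s - N = s + N := fun s => by
      linear_combination -hnn
    have hNN : ∀ s : ZMod (2 * n), s + N + N = s := fun s => by
      linear_combination hnn
    have hSee := cw_spread_auto n k c hcauto e he
    have expand : ∀ x : ZMod (2 * n),
        (b x - b (x - N) + e x + e (x - N)) *
          (b (x + t) - b (x + t - N) + e (x + t) + e (x + t - N)) =
        b x * b (x + t) - b x * b (x + (t + N)) + b x * e (x + t)
          + b x * e (x + (t + N))
        - b (x - N) * b (x + t) + b (x - N) * b (x + (t + N))
          - b (x - N) * e (x + t) - b (x - N) * e (x + (t + N))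
        + e x * b (x + t) - e x * b (x + (t + N)) + e x * e (x + t)
          + e x * e (x + (t + N))
        + e (x - N) * b (x + t) - e (x - N) * b (x + (t + N))
          + e (x - N) * e (x + t) + e (x - N) * e (x + (t + N)) := by
      intro x
      rw [add_sub_assoc, hsub t]
      ring
    calc (∑ x : ZMod (2 * n),
        (b x - b (x - N) + e x + e (x - N)) *
          (b (x + t) - b (x + t - N) + e (x + t) + e (x + t - N)))
        = ∑ x : ZMod (2 * n),
          (b x * b (x + t) - b x * b (x + (t + N)) + b x * e (x + t)
          + b x * e (x + (t + N))
        - b (x - N) * b (x + t) + b (x - N) * b (x + (t + N))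
          - b (x - N) * e (x + t) - b (x - N) * e (x + (t + N))
        + e x * b (x + t) - e x * b (x + (t + N)) + e x * e (x + t)
          + e x * e (x + (t + N))
        + e (x - N) * b (x + t) - e (x - N) * b (x + (t + N))
          + e (x - N) * e (x + t) + e (x - N) * e (x + (t + N))) :=
          Finset.sum_congr rfl fun x _ => expand x
      _ = if t = 0 then 4 * k else 0 := by
          simp only [Finset.sum_add_distrib, Finset.sum_sub_distrib]
          rw [cw_sum_shift b b N t, cw_sum_shift b b N (t + N),
            cw_sum_shift b e N t, cw_sum_shift b e N (t + N),
            cw_sum_shift e b N t, cw_sum_shift e b N (t + N),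
            cw_sum_shift e e N t, cw_sum_shift e e N (t + N)]
          simp only [hNN]
          rw [hbauto t, hbauto (t + N), hSee t, hSee (t + N)]
          split_ifs <;> ring
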